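/- arXiv:2403.18688 — 2 statements merged into one kernel-verified Lean document; each statement's English description precedes it below -/
import Mathlib

section
/- Let V be an anisotropic quadratic space over Q_p of dimension 3 with quadratic form Q. Then V contains a unique maximal Z_p-lattice on which Q takes values in Z_p, namely the set of all v in V with Q(v) in Z_p. -/
open QuadraticMap

variable {p : ℕ} [Fact p.Prime]

private lemma norm_one_add_of_lt {s : ℤ_[p]} (h : ‖s‖ < 1) : ‖1 + s‖ = 1 := by
  apply le_antisymm
  · calc ‖(1:ℤ_[p]) + s‖ ≤ max ‖(1:ℤ_[p])‖ ‖s‖ := PadicInt.nonarchimedean _ _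
      _ ≤ 1 := by rw [norm_one]; exact max_le le_rfl h.le
  · by_contra hlt
    push_neg at hlt
    have h1 : ‖(1:ℤ_[p])‖ ≤ max ‖1 + s‖ ‖-s‖ := by
      calc ‖(1:ℤ_[p])‖ = ‖(1 + s) + (-s)‖ := by ring_nf
        _ ≤ max ‖1 + s‖ ‖-s‖ := PadicInt.nonarchimedean _ _
    rw [norm_one, norm_neg] at h1
    rcases max_cases ‖1 + s‖ ‖s‖ with ⟨he, _⟩ | ⟨he, _⟩ <;> rw [he] at h1 <;> linarith

private lemma key_polar {V : Type*} [AddCommGroup V] [Module ℚ_[p] V]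
    (Q : QuadraticForm ℚ_[p] V) (haniso : Q.Anisotropic) {x y : V}
    (hx : ‖Q x‖ ≤ 1) (hy : ‖Q y‖ ≤ 1) : ‖polar Q x y‖ ≤ 1 := by
  by_contra hb
  push_neg at hb
  set a := Q y with ha
  set c := Q x with hc
  set b := polar Q x y with hbdef
  have hbpos : (0:ℝ) < ‖b‖ := lt_trans one_pos hb
  have hbne : b ≠ 0 := by
    intro h0; rw [h0, norm_zero] at hbpos; exact lt_irrefl _ hbpos
  have hb2 : (1:ℝ) < ‖b‖ ^ 2 := by nlinarith
  have hAle : ‖a / b ^ 2‖ < 1 := by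
    rw [norm_div, norm_pow, div_lt_one (by positivity)]
    exact lt_of_le_of_lt hy hb2
  set A : ℤ_[p] := ⟨a / b ^ 2, hAle.le⟩ with hA
  set Cc : ℤ_[p] := ⟨c, hx⟩ with hCc
  have hnA : ‖A‖ < 1 := hAle
  have hnC : ‖Cc‖ ≤ 1 := PadicInt.norm_le_one _
  set F : Polynomial ℤ_[p] :=
    Polynomial.C A * Polynomial.X ^ 2 + Polynomial.X + Polynomial.C Cc with hF
  have heval : F.eval (-Cc) = A * Cc ^ 2 := by
    simp [hF]
  have hderiv : F.derivative.eval (-Cc) = 1 + -(2 * A * Cc) := by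
    simp [hF]
    ring
  have h2AC : ‖-(2 * A * Cc)‖ < 1 := by
    rw [norm_neg]
    have e1 : ‖2 * A * Cc‖ = ‖(2:ℤ_[p])‖ * ‖A‖ * ‖Cc‖ := by
      rw [norm_mul, norm_mul]
    rw [e1]
    have s1 : ‖(2:ℤ_[p])‖ * ‖A‖ ≤ ‖A‖ :=
      mul_le_of_le_one_left (norm_nonneg A) (PadicInt.norm_le_one 2)
    have s2 : ‖(2:ℤ_[p])‖ * ‖A‖ * ‖Cc‖ ≤ ‖(2:ℤ_[p])‖ * ‖A‖ :=
      mul_le_of_le_one_right (by positivity) hnC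
    linarith
  have hnd : ‖F.derivative.eval (-Cc)‖ = 1 := by rw [hderiv]; exact norm_one_add_of_lt h2AC
  have hhens : ‖F.eval (-Cc)‖ < ‖F.derivative.eval (-Cc)‖ ^ 2 := by
    rw [heval, hnd, one_pow]
    have e1 : ‖A * Cc ^ 2‖ = ‖A‖ * (‖Cc‖ * ‖Cc‖) := by
      rw [pow_two, norm_mul, norm_mul]
    rw [e1]
    have s1 : ‖Cc‖ * ‖Cc‖ ≤ 1 := mul_le_one₀ hnC (norm_nonneg _) hnC
    have s2 : ‖A‖ * (‖Cc‖ * ‖Cc‖) ≤ ‖A‖ := mul_le_of_le_one_right (norm_nonneg _) s1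
    linarith
  obtain ⟨z, hz0, -⟩ := hensels_lemma hhens
  have hzeval : A * z ^ 2 + z + Cc = 0 := by
    simpa [hF] using hz0
  have hq : (a / b ^ 2) * (z : ℚ_[p]) ^ 2 + (z : ℚ_[p]) + c = 0 := by
    have := congrArg (fun w : ℤ_[p] => (w : ℚ_[p])) hzeval
    push_cast at this
    simpa [hA, hCc] using this
  set t : ℚ_[p] := (z : ℚ_[p]) / b with htdef
  have hQz : Q (x + t • y) = 0 := by
    have hpol : Q (x + t • y) = Q x + Q (t • y) + polar Q x (t • y) := by
      rw [polar]; ring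
    rw [hpol, QuadraticMap.map_smul, polar_smul_right, smul_eq_mul, smul_eq_mul]
    have hexp : c + t * t * a + t * b = a / b ^ 2 * (z:ℚ_[p]) ^ 2 + (z:ℚ_[p]) + c := by
      rw [htdef]
      field_simp
      ring
    calc Q x + t * t * Q y + t * polar Q x y = c + t * t * a + t * b := by rw [← ha, ← hc, ← hbdef]
      _ = a / b ^ 2 * (z:ℚ_[p]) ^ 2 + (z:ℚ_[p]) + c := hexp
      _ = 0 := hq
  have hx0 : x + t • y = 0 := haniso _ hQz
  have hxy : x = (-t) • y := by
    rw [neg_smul]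
    exact eq_neg_of_add_eq_zero_left hx0
  have hbval : b = (-t) * (a + a) := by
    rw [hbdef, hxy, polar_smul_left, polar_self, smul_eq_mul, two_nsmul]
  have hnt : ‖t‖ * ‖b‖ ≤ 1 := by
    rw [htdef, norm_div, div_mul_cancel₀ _ (ne_of_gt hbpos)]
    exact z.2
  have haa : ‖a + a‖ ≤ 1 := by
    calc ‖a + a‖ ≤ max ‖a‖ ‖a‖ := Padic.nonarchimedean _ _
      _ = ‖a‖ := max_self _
      _ ≤ 1 := hy
  have hbn : ‖b‖ = ‖t‖ * ‖a + a‖ := by rw [hbval, norm_mul, norm_neg]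
  nlinarith [norm_nonneg t, norm_nonneg (a + a)]

open QuadraticMap

section aux
variable {p : ℕ} [Fact p.Prime]

-- continuity of a quadratic form in coordinates
private lemma cont_aux {n : ℕ} {V : Type*} [AddCommGroup V] [Module ℚ_[p] V]
    (Q : QuadraticForm ℚ_[p] V) (b : Module.Basis (Fin n) ℚ_[p] V) :
    Continuous fun x : Fin n → ℚ_[p] => Q (b.equivFun.symm x) := by
  classical
  letI : Invertible (2 : ℚ_[p]) := invertibleOfNonzero two_ne_zero
  set F := QuadraticMap.associatedHom ℚ_[p] Q with hFdef
  have hrepr : ∀ x : Fin n → ℚ_[p],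
      Q (b.equivFun.symm x) = ∑ i, x i * ∑ j, x j * F (b i) (b j) := by
    intro x
    rw [← QuadraticMap.associated_eq_self_apply ℚ_[p] Q (b.equivFun.symm x),
      Module.Basis.equivFun_symm_apply, ← hFdef]
    rw [map_sum F, LinearMap.sum_apply]
    refine Finset.sum_congr rfl fun i _ => ?_
    rw [_root_.map_smul, LinearMap.smul_apply, smul_eq_mul]
    congr 1
    rw [map_sum]
    exact Finset.sum_congr rfl fun j _ => by rw [_root_.map_smul, smul_eq_mul]
  rw [show (fun x : Fin n → ℚ_[p] => Q (b.equivFun.symm x)) =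
      fun x => ∑ i, x i * ∑ j, x j * F (b i) (b j) from funext hrepr]
  exact continuous_finset_sum _ fun i _ =>
    (continuous_apply i).mul (continuous_finset_sum _ fun j _ =>
      (continuous_apply j).mul continuous_const)


private lemma definite {n : ℕ} (hn : 0 < n) {V : Type*} [AddCommGroup V] [Module ℚ_[p] V]
    (Q : QuadraticForm ℚ_[p] V) (haniso : Q.Anisotropic) (b : Module.Basis (Fin n) ℚ_[p] V) :
    ∃ ε : ℝ, 0 < ε ∧ ∀ v : V, ε * ‖b.equivFun v‖ ^ 2 ≤ ‖Q v‖ := by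
  classical
  set G : (Fin n → ℚ_[p]) → ℝ := fun x => ‖Q (b.equivFun.symm x)‖ with hGdef
  have hG : Continuous G := (cont_aux Q b).norm
  have hsne : (Metric.sphere (0 : Fin n → ℚ_[p]) 1).Nonempty := by
    refine ⟨Pi.single ⟨0, hn⟩ 1, ?_⟩
    simp [mem_sphere_zero_iff_norm, Pi.norm_single]
  obtain ⟨x₀, hx₀, hmin⟩ :=
    (isCompact_sphere (0 : Fin n → ℚ_[p]) 1).exists_isMinOn hsne hG.continuousOn
  have hx₀norm : ‖x₀‖ = 1 := mem_sphere_zero_iff_norm.mp hx₀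
  refine ⟨G x₀, ?_, ?_⟩
  · have hne : b.equivFun.symm x₀ ≠ 0 := by
      intro h
      have hx0 : x₀ = 0 := by
        apply b.equivFun.symm.injective
        rw [h, map_zero]
      rw [hx0, norm_zero] at hx₀norm
      exact one_ne_zero hx₀norm.symm
    have hQne : Q (b.equivFun.symm x₀) ≠ 0 := fun h => hne (haniso _ h)
    exact norm_pos_iff.mpr hQne
  · intro v
    set x := b.equivFun v with hxdef
    have hv : v = b.equivFun.symm x := (b.equivFun.symm_apply_apply v).symm
    by_cases hx : x = 0
    · have hv0 : v = 0 := by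
        rw [hv, hx, map_zero]
      simp [hv0, hxdef]
    · have hxn : ∃ i, ‖x‖ = ‖x i‖ := by
        obtain ⟨i, -, hi⟩ := Finset.exists_mem_eq_sup (Finset.univ : Finset (Fin n))
          ⟨⟨0, hn⟩, Finset.mem_univ _⟩ (fun i => ‖x i‖₊)
        exact ⟨i, by rw [Pi.norm_def, hi, coe_nnnorm]⟩
      obtain ⟨i0, hi0⟩ := hxn
      set cmax := x i0 with hcmax
      have hcn : ‖cmax‖ = ‖x‖ := hi0.symm
      have hc0 : cmax ≠ 0 := by
        intro h
        apply hx
        have : ‖x‖ = 0 := by rw [← hcn, h, norm_zero]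
        exact norm_eq_zero.mp this
      set u := cmax⁻¹ • x with hu
      have hun : ‖u‖ = 1 := by
        rw [hu, norm_smul, norm_inv, hcn]
        have : ‖x‖ ≠ 0 := fun h => hx (norm_eq_zero.mp h)
        field_simp
      have humem : u ∈ Metric.sphere (0 : Fin n → ℚ_[p]) 1 := by
        simpa [mem_sphere_zero_iff_norm] using hun
      have hmin' : G x₀ ≤ G u := hmin humem
      have hxcu : x = cmax • u := by
        rw [hu, smul_inv_smul₀ hc0]
      have hQv : ‖Q v‖ = ‖cmax‖ * ‖cmax‖ * G u := by
        have h1 : Q v = (cmax * cmax) • Q (b.equivFun.symm u) := by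
          rw [hv, hxcu, _root_.map_smul, QuadraticMap.map_smul]
        rw [h1, smul_eq_mul, norm_mul, norm_mul]
      rw [hQv, hcn]
      have h2 : (0:ℝ) ≤ ‖x‖ ^ 2 := by positivity
      nlinarith [norm_nonneg x]

end aux

/-- An anisotropic 3-dimensional quadratic space `(V, Q)` over `ℚ_p` contains a
unique maximal integral `ℤ_p`-lattice, namely `{v ∈ V | Q(v) ∈ ℤ_p}` (i.e. `‖Q v‖ ≤ 1`):
this set is a `ℤ_p`-lattice containing every integral lattice. -/
theorem stmt0 (p : ℕ) [Fact p.Prime]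
    (V : Type*) [AddCommGroup V] [Module ℚ_[p] V] [Module ℤ_[p] V]
    [IsScalarTower ℤ_[p] ℚ_[p] V]
    (hdim : Module.finrank ℚ_[p] V = 3)
    (Q : QuadraticForm ℚ_[p] V) (haniso : Q.Anisotropic) :
    ∃ M : Submodule ℤ_[p] V,
      (M : Set V) = {v : V | ‖Q v‖ ≤ 1} ∧
      (M.FG ∧ Submodule.span ℚ_[p] (M : Set V) = ⊤) ∧
      ∀ L : Submodule ℤ_[p] V,
        (L.FG ∧ Submodule.span ℚ_[p] (L : Set V) = ⊤) →
        (∀ v ∈ L, ‖Q v‖ ≤ 1) → L ≤ M := by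
  classical
  haveI : FiniteDimensional ℚ_[p] V := FiniteDimensional.of_finrank_eq_succ hdim
  have hp1 : (1:ℝ) < p := by exact_mod_cast (Fact.out : p.Prime).one_lt
  have hpne : (p : ℚ_[p]) ≠ 0 := by exact_mod_cast (Fact.out : p.Prime).ne_zero
  have hzsmul : ∀ (z : ℤ_[p]) (v : V), z • v = (z : ℚ_[p]) • v := fun z v => by
    rw [← algebraMap_smul (R := ℤ_[p]) ℚ_[p] z v, PadicInt.algebraMap_apply]
  set M : Submodule ℤ_[p] V :=
    { carrier := {v : V | ‖Q v‖ ≤ 1}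
      add_mem' := fun {x y} hx hy => by
        have hpolar := key_polar Q haniso hx hy
        have hexp : Q (x + y) = Q x + Q y + QuadraticMap.polar Q x y := by
          rw [QuadraticMap.polar]; ring
        show ‖Q (x + y)‖ ≤ 1
        rw [hexp]
        calc ‖Q x + Q y + QuadraticMap.polar Q x y‖
            ≤ max ‖Q x + Q y‖ ‖QuadraticMap.polar Q x y‖ := Padic.nonarchimedean _ _
          _ ≤ 1 := max_le (le_trans (Padic.nonarchimedean _ _) (max_le hx hy)) hpolar
      zero_mem' := by
        show ‖Q 0‖ ≤ 1
        rw [map_zero, norm_zero]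
        exact zero_le_one
      smul_mem' := fun z v hv => by
        show ‖Q (z • v)‖ ≤ 1
        have hv' : ‖Q v‖ ≤ 1 := hv
        rw [hzsmul, QuadraticMap.map_smul, smul_eq_mul, norm_mul, norm_mul]
        nlinarith [norm_nonneg ((z : ℚ_[p])), norm_nonneg (Q v), z.2] } with hM
  have hmem : ∀ v : V, v ∈ M ↔ ‖Q v‖ ≤ 1 := fun v => Iff.rfl
  refine ⟨M, rfl, ⟨?_, ?_⟩, ?_⟩
  · -- M is finitely generated
    have hnpos : 0 < Module.finrank ℚ_[p] V := by rw [hdim]; norm_num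
    set b := Module.finBasis ℚ_[p] V with hb
    obtain ⟨ε, hε, hbound⟩ := definite hnpos Q haniso b
    obtain ⟨k, hk⟩ := pow_unbounded_of_one_lt (ε⁻¹) hp1
    set cpk : ℚ_[p] := ((p : ℚ_[p])⁻¹) ^ k with hcpk
    have hcpkne : cpk ≠ 0 := pow_ne_zero _ (inv_ne_zero hpne)
    have hcpknorm : ‖cpk‖ = (p : ℝ) ^ k := by
      rw [hcpk, norm_pow, norm_inv, Padic.norm_p, inv_inv]
    set N : Submodule ℤ_[p] V :=
      Submodule.span ℤ_[p] (Set.range fun i => cpk • b i) with hN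
    have hNfg : N.FG := Submodule.fg_span (Set.finite_range _)
    have hMN : M ≤ N := by
      intro v hv
      have hQv : ‖Q v‖ ≤ 1 := hv
      have hb2 : ε * ‖b.equivFun v‖ ^ 2 ≤ 1 := le_trans (hbound v) hQv
      have h1pk : (1:ℝ) ≤ (p : ℝ) ^ k := one_le_pow₀ (le_of_lt hp1)
      have hxle : ‖b.equivFun v‖ ≤ (p : ℝ) ^ k := by
        have ha2 : ‖b.equivFun v‖ ^ 2 ≤ ε⁻¹ := by
          nlinarith [mul_inv_cancel₀ (ne_of_gt hε), inv_nonneg.mpr (le_of_lt hε)]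
        have hsq : ‖b.equivFun v‖ ^ 2 < ((p : ℝ) ^ k) ^ 2 := by nlinarith
        exact le_of_lt (lt_of_pow_lt_pow_left₀ 2 (by positivity) hsq)
      have hcoord : ∀ i, ‖b.repr v i / cpk‖ ≤ 1 := by
        intro i
        rw [norm_div, hcpknorm, div_le_one (by positivity)]
        calc ‖b.repr v i‖ = ‖b.equivFun v i‖ := by rw [Module.Basis.equivFun_apply]
          _ ≤ ‖b.equivFun v‖ := norm_le_pi_norm _ i
          _ ≤ (p : ℝ) ^ k := hxle
      have hz : ∀ i, ∃ z : ℤ_[p], (z : ℚ_[p]) = b.repr v i / cpk := fun i =>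
        ⟨⟨b.repr v i / cpk, hcoord i⟩, rfl⟩
      choose z hzc using hz
      have hterm : ∀ i, z i • (cpk • b i) = b.repr v i • b i := by
        intro i
        rw [hzsmul, hzc, smul_smul, div_mul_cancel₀ _ hcpkne]
      have hvsum : v = ∑ i, z i • (cpk • b i) := by
        calc v = ∑ i, b.repr v i • b i := (b.sum_repr v).symm
          _ = ∑ i, z i • (cpk • b i) :=
            (Finset.sum_congr rfl fun i _ => (hterm i).symm)
      rw [hvsum]
      exact Submodule.sum_mem _ fun i _ =>
        Submodule.smul_mem _ _ (Submodule.subset_span ⟨i, rfl⟩)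
    haveI : IsNoetherian ℤ_[p] N := isNoetherian_of_fg_of_noetherian N hNfg
    exact isNoetherian_submodule.mp this M hMN
  · -- M spans V over ℚ_p
    rw [eq_top_iff]
    rintro v -
    obtain ⟨m, hm⟩ := pow_unbounded_of_one_lt ‖Q v‖ hp1
    have h1pm : (1:ℝ) ≤ (p : ℝ) ^ m := one_le_pow₀ (le_of_lt hp1)
    have hppos : (0:ℝ) < (p : ℝ) ^ m := by positivity
    have hw : ((p : ℚ_[p]) ^ m) • v ∈ M := by
      show ‖Q (((p : ℚ_[p]) ^ m) • v)‖ ≤ 1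
      rw [QuadraticMap.map_smul, smul_eq_mul, norm_mul, norm_mul, norm_pow,
        Padic.norm_p, inv_pow]
      have hc : ((p:ℝ) ^ m)⁻¹ * (p:ℝ) ^ m = 1 := inv_mul_cancel₀ (ne_of_gt hppos)
      nlinarith [norm_nonneg (Q v), inv_nonneg.mpr (le_of_lt hppos)]
    have hveq : v = ((p : ℚ_[p]) ^ m)⁻¹ • (((p : ℚ_[p]) ^ m) • v) := by
      rw [smul_smul, inv_mul_cancel₀ (pow_ne_zero _ hpne), one_smul]
    rw [hveq]
    exact Submodule.smul_mem _ _ (Submodule.subset_span hw)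
  · rintro L ⟨-, -⟩ hL v hv
    exact hL v hv
end

section
/- Let L = L[ϖ] ⊕ L[1] ⊕ L[ϖ⁻¹] be a Z_p-lattice in a 3-dimensional quadratic space over Q_p decomposing into rank-one eigenlattices, with L[ϖ], L[ϖ⁻¹] isotropic and pairing to Z_p^× with each other, L[1] unimodular and orthogonal to both. Then for every j ∈ Z, the lattice L_j := p^j L[ϖ] ⊕ L[1] ⊕ p^{−j} L[ϖ⁻¹] is unimodular, and L_j and L_{j+1} are p-neighbours. -/
open QuadraticMap Submodule

section AuxStmt11

variable {p : ℕ} [hp : Fact p.Prime] {V : Type*} [AddCommGroup V] [Module ℚ_[p] V]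
  [Module ℤ_[p] V] [IsScalarTower ℤ_[p] ℚ_[p] V]

lemma stmt11_zint_smul (c : ℤ_[p]) (v : V) : c • v = (c : ℚ_[p]) • v := by
  rw [← PadicInt.algebraMap_apply, algebraMap_smul]

lemma stmt11_polar3 (Q : QuadraticForm ℚ_[p] V) (wp e wm : V)
    (hQwp : Q wp = 0) (hQwm : Q wm = 0)
    (hoe1 : polar ⇑Q wp e = 0) (hoe2 : polar ⇑Q wm e = 0)
    (a b c a' b' c' : ℚ_[p]) :
    polar ⇑Q (a • wp + b • e + c • wm) (a' • wp + b' • e + c' • wm)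
      = (a * c' + a' * c) * polar ⇑Q wp wm + (b * b') * polar ⇑Q e e := by
  have h1 := polar_self Q wp
  have h2 := polar_self Q wm
  rw [hQwp] at h1; rw [hQwm] at h2
  simp only [polar_add_left, polar_add_right, polar_smul_left, polar_smul_right,
    smul_eq_mul, h1, h2, hoe1, hoe2, polar_comm (⇑Q) e wp, polar_comm (⇑Q) e wm,
    polar_comm (⇑Q) wm wp, smul_zero, mul_zero, zero_mul, zero_add, add_zero]
  ring

lemma stmt11_mem_span3 (b : Module.Basis (Fin 3) ℚ_[p] V) (s t : ℚ_[p]) (hs : s ≠ 0) (ht : t ≠ 0)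
    (v : V) :
    v ∈ Submodule.span ℤ_[p] ({s • b 0, b 1, t • b 2} : Set V) ↔
      (‖s⁻¹ * b.repr v 0‖ ≤ 1 ∧ ‖b.repr v 1‖ ≤ 1 ∧ ‖t⁻¹ * b.repr v 2‖ ≤ 1) := by
  constructor
  · intro hv
    have hadd : ∀ (u : ℚ_[p]) (x y : ℚ_[p]), ‖u * x‖ ≤ 1 → ‖u * y‖ ≤ 1 → ‖u * (x + y)‖ ≤ 1 := by
      intro u x y hx hy
      rw [mul_add]
      exact le_trans (Padic.nonarchimedean _ _) (max_le hx hy)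
    have hsm : ∀ (u : ℚ_[p]) (c : ℤ_[p]) (x : ℚ_[p]), ‖u * x‖ ≤ 1 →
        ‖u * ((c : ℚ_[p]) * x)‖ ≤ 1 := by
      intro u c x hx
      have : u * ((c : ℚ_[p]) * x) = (c : ℚ_[p]) * (u * x) := by ring
      rw [this, norm_mul]
      exact mul_le_one₀ c.property (norm_nonneg _) hx
    let N : Submodule ℤ_[p] V :=
      { carrier := {w | ‖s⁻¹ * b.repr w 0‖ ≤ 1 ∧ ‖b.repr w 1‖ ≤ 1 ∧ ‖t⁻¹ * b.repr w 2‖ ≤ 1}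
        zero_mem' := by simp
        add_mem' := by
          rintro x y ⟨hx1, hx2, hx3⟩ ⟨hy1, hy2, hy3⟩
          refine ⟨?_, ?_, ?_⟩
          · simpa only [map_add, Finsupp.add_apply] using hadd _ _ _ hx1 hy1
          · simp only [map_add, Finsupp.add_apply]
            exact le_trans (Padic.nonarchimedean _ _) (max_le hx2 hy2)
          · simpa only [map_add, Finsupp.add_apply] using hadd _ _ _ hx3 hy3
        smul_mem' := by
          rintro c x ⟨hx1, hx2, hx3⟩
          have hr : ∀ i, b.repr (c • x) i = (c : ℚ_[p]) * b.repr x i := by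
            intro i
            rw [stmt11_zint_smul, _root_.map_smul, Finsupp.smul_apply, smul_eq_mul]
          refine ⟨?_, ?_, ?_⟩
          · rw [hr]; exact hsm _ _ _ hx1
          · rw [hr, norm_mul]
            exact mul_le_one₀ c.property (norm_nonneg _) hx2
          · rw [hr]; exact hsm _ _ _ hx3 }
    have hsub : ({s • b 0, b 1, t • b 2} : Set V) ⊆ N := by
      rintro x (rfl | rfl | rfl)
      · refine ⟨?_, ?_, ?_⟩ <;>
          simp [N, _root_.map_smul, Module.Basis.repr_self, Finsupp.single_apply, inv_mul_cancel₀ hs]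
      · refine ⟨?_, ?_, ?_⟩ <;> simp [N, Module.Basis.repr_self, Finsupp.single_apply]
      · refine ⟨?_, ?_, ?_⟩ <;>
          simp [N, _root_.map_smul, Module.Basis.repr_self, Finsupp.single_apply, inv_mul_cancel₀ ht]
    exact (Submodule.span_le.2 hsub) hv
  · rintro ⟨h1, h2, h3⟩
    have hv := b.sum_repr v
    rw [Fin.sum_univ_three] at hv
    obtain ⟨z0, hz0⟩ : ∃ z : ℤ_[p], (z : ℚ_[p]) = s⁻¹ * b.repr v 0 := ⟨⟨_, h1⟩, rfl⟩
    obtain ⟨z1, hz1⟩ : ∃ z : ℤ_[p], (z : ℚ_[p]) = b.repr v 1 := ⟨⟨_, h2⟩, rfl⟩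
    obtain ⟨z2, hz2⟩ : ∃ z : ℤ_[p], (z : ℚ_[p]) = t⁻¹ * b.repr v 2 := ⟨⟨_, h3⟩, rfl⟩
    have e0 : b.repr v 0 • b 0 = z0 • (s • b 0) := by
      rw [stmt11_zint_smul, hz0, smul_smul]
      congr 1
      field_simp
    have e1 : b.repr v 1 • b 1 = z1 • b 1 := by rw [stmt11_zint_smul, hz1]
    have e2 : b.repr v 2 • b 2 = z2 • (t • b 2) := by
      rw [stmt11_zint_smul, hz2, smul_smul]
      congr 1
      field_simp
    rw [← hv, e0, e1, e2]
    refine add_mem (add_mem ?_ ?_) ?_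
    · exact smul_mem _ _ (subset_span (by simp))
    · exact smul_mem _ _ (subset_span (by simp))
    · exact smul_mem _ _ (subset_span (by simp))

lemma stmt11_card_quot (M K : Submodule ℤ_[p] V) (φ : V →ₗ[ℚ_[p]] ℚ_[p])
    (hφ1 : ∀ v ∈ M, ‖φ v‖ ≤ 1)
    (hker : ∀ v ∈ M, (v ∈ K ↔ ‖φ v‖ ≤ ((p : ℝ))⁻¹))
    (hsurj : ∃ v ∈ M, ‖φ v‖ = 1) :
    Nat.card (↥M ⧸ Submodule.comap M.subtype K) = p := by
  haveI : NeZero p := ⟨hp.out.ne_zero⟩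
  letI : Module ℤ_[p] (ZMod p) := (PadicInt.toZMod (p := p)).toModule
  have hsmul : ∀ (c : ℤ_[p]) (t : ZMod p), c • t = PadicInt.toZMod c * t := fun _ _ => rfl
  have hint : ∀ x : ↥M, ‖φ (x : V)‖ ≤ 1 := fun x => hφ1 x x.2
  have hker0 : ∀ z : ℤ_[p], PadicInt.toZMod z = 0 ↔ ‖z‖ < 1 := by
    intro z
    rw [← RingHom.mem_ker, PadicInt.ker_toZMod, IsLocalRing.mem_maximalIdeal,
      PadicInt.mem_nonunits]
  have hlt : ∀ x : ℚ_[p], ‖x‖ < 1 ↔ ‖x‖ ≤ (p : ℝ)⁻¹ := by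
    intro x
    have := (Padic.norm_le_pow_iff_norm_lt_pow_add_one x (-1)).symm
    simpa using this
  let g0 : ↥M →ₗ[ℤ_[p]] ℤ_[p] :=
    { toFun := fun x => ⟨φ (x : V), hint x⟩
      map_add' := by
        intro x y
        apply Subtype.ext
        show φ (((x + y : ↥M)) : V) = φ (x : V) + φ (y : V)
        rw [Submodule.coe_add, map_add]
      map_smul' := by
        intro c x
        apply Subtype.ext
        show φ ((c • x : ↥M) : V) = (c : ℚ_[p]) * φ (x : V)
        rw [Submodule.coe_smul, stmt11_zint_smul, _root_.map_smul, smul_eq_mul] }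
  let g1 : ℤ_[p] →ₗ[ℤ_[p]] ZMod p :=
    { toFun := PadicInt.toZMod
      map_add' := fun a b => map_add _ a b
      map_smul' := fun c z => by
        show PadicInt.toZMod (c * z) = (RingHom.id ℤ_[p]) c • PadicInt.toZMod z
        rw [map_mul, RingHom.id_apply, hsmul] }
  let g : ↥M →ₗ[ℤ_[p]] ZMod p := g1.comp g0
  have hgx : ∀ x : ↥M, g x = PadicInt.toZMod (⟨φ (x : V), hint x⟩ : ℤ_[p]) := fun _ => rfl
  have hK : Submodule.comap M.subtype K = LinearMap.ker g := by
    ext x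
    rw [Submodule.mem_comap, LinearMap.mem_ker, hgx]
    erw [hker0]
    show (x : V) ∈ K ↔ _
    rw [hker _ x.2]
    erw [PadicInt.norm_def]
    exact (hlt _).symm
  have hg : Function.Surjective g := by
    obtain ⟨v₀, hv₀M, hv₀⟩ := hsurj
    intro t
    set w : ZMod p := g ⟨v₀, hv₀M⟩ with hw
    have hw0 : w ≠ 0 := by
      intro h
      rw [hw, hgx] at h
      erw [hker0] at h
      erw [PadicInt.norm_def] at h
      simp only [hv₀] at h
      exact absurd h (lt_irrefl 1)
    refine ⟨(((t * w⁻¹).val : ℤ_[p])) • ⟨v₀, hv₀M⟩, ?_⟩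
    rw [_root_.map_smul, hsmul, ← hw, map_natCast, ZMod.natCast_rightInverse (t * w⁻¹)]
    field_simp
  rw [hK, Nat.card_congr (g.quotKerEquivOfSurjective hg).toEquiv, Nat.card_zmod]

end AuxStmt11


/-- A `ℤ_p`-lattice `L` in a `ℚ_p`-quadratic space is unimodular (self-dual) if it is a full
lattice equal to its dual `{w | ⟨w, L⟩ ⊆ ℤ_p}` with respect to the bilinear form
`⟨v,w⟩ = Q(v+w) − Q(v) − Q(w)`. -/
def IsUnimodularLattice (p : ℕ) [Fact p.Prime] {V : Type*} [AddCommGroup V]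
    [Module ℚ_[p] V] [Module ℤ_[p] V] [IsScalarTower ℤ_[p] ℚ_[p] V]
    (Q : QuadraticForm ℚ_[p] V) (L : Submodule ℤ_[p] V) : Prop :=
  L.FG ∧ Submodule.span ℚ_[p] (L : Set V) = ⊤ ∧
    (L : Set V) = {w : V | ∀ l ∈ L, ‖QuadraticMap.polar (⇑Q) w l‖ ≤ 1}

/-- For `L = L[ϖ] ⊕ L[1] ⊕ L[ϖ⁻¹] = ⟨w⁺, e, w⁻⟩` with `w⁺, w⁻` isotropic and
pairing to a unit, `e` unimodular and orthogonal to both, the lattices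
`L_j = ⟨p^j w⁺, e, p^{−j} w⁻⟩` are unimodular and `L_j`, `L_{j+1}` are `p`-neighbours. -/
theorem stmt11 (p : ℕ) [Fact p.Prime]
    (V : Type*) [AddCommGroup V] [Module ℚ_[p] V] [Module ℤ_[p] V]
    [IsScalarTower ℤ_[p] ℚ_[p] V]
    (Q : QuadraticForm ℚ_[p] V)
    (wp e wm : V)
    (hli : LinearIndependent ℚ_[p] ![wp, e, wm])
    (hspan : Submodule.span ℚ_[p] ({wp, e, wm} : Set V) = ⊤)
    (hQwp : Q wp = 0) (hQwm : Q wm = 0)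
    (hpair : ‖QuadraticMap.polar (⇑Q) wp wm‖ = 1)
    (hoe1 : QuadraticMap.polar (⇑Q) wp e = 0)
    (hoe2 : QuadraticMap.polar (⇑Q) wm e = 0)
    (he : ‖QuadraticMap.polar (⇑Q) e e‖ = 1)
    (L : ℤ → Submodule ℤ_[p] V)
    (hL : ∀ j : ℤ, L j = Submodule.span ℤ_[p]
      ({((p : ℚ_[p]) ^ j) • wp, e, ((p : ℚ_[p]) ^ (-j)) • wm} : Set V)) :
    ∀ j : ℤ, IsUnimodularLattice p Q (L j) ∧
      Nat.card (↥(L j) ⧸ Submodule.comap (L j).subtype (L j ⊓ L (j + 1))) = p ∧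
      Nat.card (↥(L (j + 1)) ⧸ Submodule.comap (L (j + 1)).subtype (L j ⊓ L (j + 1))) = p := by
  have hpprime : p.Prime := Fact.out
  have hp0 : (p : ℚ_[p]) ≠ 0 := Nat.cast_ne_zero.2 hpprime.ne_zero
  have hpR : (0 : ℝ) < p := by exact_mod_cast hpprime.pos
  have hpR1 : (1 : ℝ) < p := by exact_mod_cast hpprime.one_lt
  have hrange : Set.range ![wp, e, wm] = {wp, e, wm} := by
    ext x; simp [Matrix.range_cons, Matrix.range_empty]; tauto
  let b : Module.Basis (Fin 3) ℚ_[p] V := Module.Basis.mk hli (by rw [hrange, hspan])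
  have hb0 : b 0 = wp := by simp [b, Module.Basis.mk_apply]
  have hb1 : b 1 = e := by simp [b, Module.Basis.mk_apply]
  have hb2 : b 2 = wm := by simp [b, Module.Basis.mk_apply]
  -- membership characterization
  have hmem : ∀ (k : ℤ) (v : V), v ∈ L k ↔
      (‖(p : ℚ_[p]) ^ (-k) * b.repr v 0‖ ≤ 1 ∧ ‖b.repr v 1‖ ≤ 1 ∧
       ‖(p : ℚ_[p]) ^ k * b.repr v 2‖ ≤ 1) := by
    intro k v
    rw [hL k, ← hb0, ← hb1, ← hb2]
    have := stmt11_mem_span3 b ((p : ℚ_[p]) ^ k) ((p : ℚ_[p]) ^ (-k))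
      (zpow_ne_zero _ hp0) (zpow_ne_zero _ hp0) v
    simpa only [← zpow_neg, neg_neg] using this
  -- generators are in L k
  have hgen1 : ∀ k : ℤ, ((p : ℚ_[p]) ^ k) • wp ∈ L k := by
    intro k; rw [hL]; exact Submodule.subset_span (by simp)
  have hgen2 : ∀ k : ℤ, e ∈ L k := by
    intro k; rw [hL]; exact Submodule.subset_span (by simp)
  have hgen3 : ∀ k : ℤ, ((p : ℚ_[p]) ^ (-k)) • wm ∈ L k := by
    intro k; rw [hL]; exact Submodule.subset_span (by simp)
  -- decomposition of vectors
  have hrep : ∀ v : V, v = b.repr v 0 • wp + b.repr v 1 • e + b.repr v 2 • wm := by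
    intro v
    conv_lhs => rw [← b.sum_repr v]
    rw [Fin.sum_univ_three, hb0, hb1, hb2]
  -- repr of generators
  have hrg1 : ∀ k : ℤ, b.repr (((p : ℚ_[p]) ^ k) • wp) 0 = (p : ℚ_[p]) ^ k := by
    intro k; rw [← hb0, _root_.map_smul, Finsupp.smul_apply, Module.Basis.repr_self]; simp
  have hrg3 : ∀ k : ℤ, b.repr (((p : ℚ_[p]) ^ (-k)) • wm) 2 = (p : ℚ_[p]) ^ (-k) := by
    intro k; rw [← hb2, _root_.map_smul, Finsupp.smul_apply, Module.Basis.repr_self]; simp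
  -- norm products of opposite powers
  have hone : ∀ k : ℤ, (p : ℚ_[p]) ^ k * (p : ℚ_[p]) ^ (-k) = 1 := by
    intro k; rw [← zpow_add₀ hp0, add_neg_cancel, zpow_zero]
  have key : ∀ (k : ℤ) (x y : ℚ_[p]), ‖(p : ℚ_[p]) ^ (-k) * x‖ ≤ 1 →
      ‖(p : ℚ_[p]) ^ k * y‖ ≤ 1 → ‖x * y‖ ≤ 1 := by
    intro k x y hx hy
    have h2 : ((p : ℚ_[p]) ^ (-k)) * ((p : ℚ_[p]) ^ k) = 1 := by
      rw [mul_comm]; exact hone k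
    have : x * y = ((p : ℚ_[p]) ^ (-k) * x) * ((p : ℚ_[p]) ^ k * y) := by
      calc x * y = (((p : ℚ_[p]) ^ (-k)) * ((p : ℚ_[p]) ^ k)) * (x * y) := by
            rw [h2, one_mul]
        _ = ((p : ℚ_[p]) ^ (-k) * x) * ((p : ℚ_[p]) ^ k * y) := by ring
    rw [this, norm_mul]
    exact mul_le_one₀ hx (norm_nonneg _) hy
  -- norm splitting lemmas
  have hsplitn : ∀ (k : ℤ) (x : ℚ_[p]),
      ‖(p : ℚ_[p]) ^ (-(k + 1)) * x‖ = (p : ℝ) * ‖(p : ℚ_[p]) ^ (-k) * x‖ := by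
    intro k x
    have h : (-(k + 1)) = (-1) + (-k) := by ring
    rw [h, zpow_add₀ hp0, mul_assoc, norm_mul, norm_mul ((p:ℚ_[p])^(-k)), zpow_neg_one,
      norm_inv, Padic.norm_p, inv_inv]
  have hsplitp : ∀ (k : ℤ) (x : ℚ_[p]),
      ‖(p : ℚ_[p]) ^ (k + 1) * x‖ = (p : ℝ)⁻¹ * ‖(p : ℚ_[p]) ^ k * x‖ := by
    intro k x
    rw [zpow_add₀ hp0, zpow_one, mul_comm ((p:ℚ_[p])^k), mul_assoc, norm_mul,
      Padic.norm_p, norm_mul]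
  intro j
  refine ⟨⟨?_, ?_, ?_⟩, ?_, ?_⟩
  -- FG
  · rw [hL]
    exact Submodule.fg_span (Set.toFinite _)
  -- full rank
  · rw [eq_top_iff, ← hspan]
    refine Submodule.span_le.2 ?_
    intro x hx
    simp only [Set.mem_insert_iff, Set.mem_singleton_iff] at hx
    rcases hx with rfl | rfl | rfl
    · have h1 := Submodule.subset_span (R := ℚ_[p]) (SetLike.mem_coe.2 (hgen1 j))
      have := Submodule.smul_mem (Submodule.span ℚ_[p] ((L j : Set V))) ((p : ℚ_[p]) ^ j)⁻¹ h1
      rwa [smul_smul, inv_mul_cancel₀ (zpow_ne_zero _ hp0), one_smul] at this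
    · exact Submodule.subset_span (SetLike.mem_coe.2 (hgen2 j))
    · have h1 := Submodule.subset_span (R := ℚ_[p]) (SetLike.mem_coe.2 (hgen3 j))
      have := Submodule.smul_mem (Submodule.span ℚ_[p] ((L j : Set V))) ((p : ℚ_[p]) ^ (-j))⁻¹ h1
      rwa [smul_smul, inv_mul_cancel₀ (zpow_ne_zero _ hp0), one_smul] at this
  -- self-dual
  · ext w
    simp only [SetLike.mem_coe, Set.mem_setOf_eq]
    constructor
    · intro hw l hl
      obtain ⟨hw1, hw2, hw3⟩ := (hmem j w).1 hw
      obtain ⟨hl1, hl2, hl3⟩ := (hmem j l).1 hl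
      rw [hrep w, hrep l, stmt11_polar3 Q wp e wm hQwp hQwm hoe1 hoe2]
      refine le_trans (Padic.nonarchimedean _ _) (max_le ?_ ?_)
      · rw [norm_mul, hpair, mul_one]
        refine le_trans (Padic.nonarchimedean _ _) (max_le ?_ ?_)
        · exact key j _ _ hw1 hl3
        · exact key j _ _ hl1 hw3
      · rw [norm_mul, he, mul_one, norm_mul]
        exact mul_le_one₀ hw2 (norm_nonneg _) hl2
    · intro hw
      have h1 := hw _ (hgen1 j)
      have h2 := hw _ (hgen2 j)
      have h3 := hw _ (hgen3 j)
      have e1 : ((p : ℚ_[p]) ^ j) • wp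
          = ((p : ℚ_[p]) ^ j) • wp + (0 : ℚ_[p]) • e + (0 : ℚ_[p]) • wm := by simp
      have e2 : e = (0 : ℚ_[p]) • wp + (1 : ℚ_[p]) • e + (0 : ℚ_[p]) • wm := by simp
      have e3 : ((p : ℚ_[p]) ^ (-j)) • wm
          = (0 : ℚ_[p]) • wp + (0 : ℚ_[p]) • e + ((p : ℚ_[p]) ^ (-j)) • wm := by simp
      rw [e1] at h1; rw [e2] at h2; rw [e3] at h3
      rw [hrep w, stmt11_polar3 Q wp e wm hQwp hQwm hoe1 hoe2] at h1 h2 h3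
      simp only [mul_zero, zero_mul, mul_one, add_zero, zero_add] at h1 h2 h3
      rw [norm_mul, hpair, mul_one] at h1 h3
      rw [norm_mul, he, mul_one] at h2
      refine (hmem j w).2 ⟨?_, h2, ?_⟩
      · simpa [mul_comm] using h3
      · simpa [mul_comm] using h1
  -- first index
  · refine stmt11_card_quot (L j) (L j ⊓ L (j + 1))
      (((p : ℚ_[p]) ^ (-j)) • (b.coord 0)) ?_ ?_ ?_
    · intro v hv
      have := ((hmem j v).1 hv).1
      simpa using this
    · intro v hv
      rw [Submodule.mem_inf]
      obtain ⟨h1, h2, h3⟩ := (hmem j v).1 hv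
      have hval : ‖(((p : ℚ_[p]) ^ (-j)) • (b.coord 0)) v‖
          = ‖(p : ℚ_[p]) ^ (-j) * b.repr v 0‖ := by simp
      rw [hval]
      constructor
      · rintro ⟨-, hv1⟩
        obtain ⟨g1, -, -⟩ := (hmem (j + 1) v).1 hv1
        rw [hsplitn j (b.repr v 0)] at g1
        have heq : ‖(p : ℚ_[p]) ^ (-j) * b.repr v 0‖
            = (p : ℝ)⁻¹ * ((p : ℝ) * ‖(p : ℚ_[p]) ^ (-j) * b.repr v 0‖) := by
          field_simp
        rw [heq]
        calc (p : ℝ)⁻¹ * ((p : ℝ) * ‖(p : ℚ_[p]) ^ (-j) * b.repr v 0‖) ≤ (p : ℝ)⁻¹ * 1 :=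
              mul_le_mul_of_nonneg_left g1 (by positivity)
          _ = (p : ℝ)⁻¹ := mul_one _
      · intro hle
        refine ⟨hv, (hmem (j + 1) v).2 ⟨?_, h2, ?_⟩⟩
        · rw [hsplitn j (b.repr v 0)]
          calc (p : ℝ) * ‖(p : ℚ_[p]) ^ (-j) * b.repr v 0‖ ≤ (p : ℝ) * (p : ℝ)⁻¹ :=
                mul_le_mul_of_nonneg_left hle (le_of_lt hpR)
            _ = 1 := mul_inv_cancel₀ (ne_of_gt hpR)
        · rw [hsplitp j (b.repr v 2)]
          calc (p : ℝ)⁻¹ * ‖(p : ℚ_[p]) ^ j * b.repr v 2‖ ≤ (p : ℝ)⁻¹ * 1 :=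
                mul_le_mul_of_nonneg_left h3 (by positivity)
            _ = (p : ℝ)⁻¹ := mul_one _
            _ ≤ 1 := by
                rw [inv_le_one₀ hpR]; exact le_of_lt hpR1
    · refine ⟨((p : ℚ_[p]) ^ j) • wp, hgen1 j, ?_⟩
      have : (((p : ℚ_[p]) ^ (-j)) • (b.coord 0)) (((p : ℚ_[p]) ^ j) • wp)
          = (p : ℚ_[p]) ^ (-j) * b.repr (((p : ℚ_[p]) ^ j) • wp) 0 := by
        simp
        ring
      rw [this, hrg1 j, mul_comm, hone j, norm_one]
  -- second index
  · refine stmt11_card_quot (L (j + 1)) (L j ⊓ L (j + 1))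
      (((p : ℚ_[p]) ^ (j + 1)) • (b.coord 2)) ?_ ?_ ?_
    · intro v hv
      have := ((hmem (j + 1) v).1 hv).2.2
      simpa using this
    · intro v hv
      rw [Submodule.mem_inf]
      obtain ⟨h1, h2, h3⟩ := (hmem (j + 1) v).1 hv
      have hval : ‖(((p : ℚ_[p]) ^ (j + 1)) • (b.coord 2)) v‖
          = ‖(p : ℚ_[p]) ^ (j + 1) * b.repr v 2‖ := by simp
      rw [hval]
      constructor
      · rintro ⟨hv1, -⟩
        obtain ⟨g1, g2, g3⟩ := (hmem j v).1 hv1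
        rw [hsplitp j (b.repr v 2)]
        calc (p : ℝ)⁻¹ * ‖(p : ℚ_[p]) ^ j * b.repr v 2‖ ≤ (p : ℝ)⁻¹ * 1 :=
              mul_le_mul_of_nonneg_left g3 (by positivity)
          _ = (p : ℝ)⁻¹ := mul_one _
      · intro hle
        refine ⟨(hmem j v).2 ⟨?_, h2, ?_⟩, hv⟩
        · rw [show (-j : ℤ) = -(j+1) + 1 by ring, hsplitp (-(j+1)) (b.repr v 0),
            show (-(j+1) : ℤ) = -(j+1) by rfl]
          calc (p : ℝ)⁻¹ * ‖(p : ℚ_[p]) ^ (-(j+1)) * b.repr v 0‖ ≤ (p : ℝ)⁻¹ * 1 :=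
                mul_le_mul_of_nonneg_left h1 (by positivity)
            _ = (p : ℝ)⁻¹ := mul_one _
            _ ≤ 1 := by
                rw [inv_le_one₀ hpR]; exact le_of_lt hpR1
        · have heq : ‖(p : ℚ_[p]) ^ j * b.repr v 2‖
              = (p : ℝ) * ‖(p : ℚ_[p]) ^ (j + 1) * b.repr v 2‖ := by
            rw [hsplitp j (b.repr v 2)]
            field_simp
          rw [heq]
          calc (p : ℝ) * ‖(p : ℚ_[p]) ^ (j+1) * b.repr v 2‖ ≤ (p : ℝ) * (p : ℝ)⁻¹ :=
                mul_le_mul_of_nonneg_left hle (le_of_lt hpR)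
            _ = 1 := mul_inv_cancel₀ (ne_of_gt hpR)
    · refine ⟨((p : ℚ_[p]) ^ (-(j + 1))) • wm, hgen3 (j + 1), ?_⟩
      have : (((p : ℚ_[p]) ^ (j + 1)) • (b.coord 2)) (((p : ℚ_[p]) ^ (-(j + 1))) • wm)
          = (p : ℚ_[p]) ^ (j + 1) * b.repr (((p : ℚ_[p]) ^ (-(j + 1))) • wm) 2 := by
        simp
        ring
      rw [this, hrg3 (j + 1), hone (j + 1), norm_one]
end
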